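/- Suppose I and I' are Gotzmann homogeneous ideals of S = K[x_1,…,x_n], generated in degrees d and d' respectively with d ≥ d', and μ(I) = μ(I'). Then H_I(T) = T^{d−d'} H_{I'}(T); equivalently H(I, d+δ) = H(I', d'+δ) for all δ ≥ 0; and consequently hdepth_1(I) = hdepth_1(I'). -/

import Mathlib

noncomputable section

open MvPolynomial

/-- The total degree of an exponent vector. -/
def edeg {n : ℕ} (a : Fin n →₀ ℕ) : ℕ := ∑ i, a i

/-- An exponent vector is squarefree if every exponent is at most 1. -/
def IsSqfree {n : ℕ} (a : Fin n →₀ ℕ) : Prop := ∀ i, a i ≤ 1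

/-- The set of exponent vectors of monomials belonging to the ideal `I`. -/
def expSet {K : Type} [Field K] {n : ℕ} (I : Ideal (MvPolynomial (Fin n) K)) :
    Set (Fin n →₀ ℕ) := {a | (monomial a (1 : K)) ∈ I}

/-- `I` is generated by monomials `x^a` with `a` satisfying the predicate `P`. -/
def GenBy {K : Type} [Field K] {n : ℕ} (I : Ideal (MvPolynomial (Fin n) K))
    (P : (Fin n →₀ ℕ) → Prop) : Prop :=
  ∃ G : Set (Fin n →₀ ℕ), (∀ a ∈ G, P a) ∧
    I = Ideal.span ((fun a => (monomial a (1 : K))) '' G)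

/-- `I` is a monomial ideal. -/
def IsMonomialIdeal {K : Type} [Field K] {n : ℕ} (I : Ideal (MvPolynomial (Fin n) K)) : Prop :=
  GenBy I fun _ => True

/-- `I` is a squarefree monomial ideal. -/
def IsSqfreeMonomialIdeal {K : Type} [Field K] {n : ℕ}
    (I : Ideal (MvPolynomial (Fin n) K)) : Prop := GenBy I IsSqfree

/-- `x^a >_lex x^b` in the lexicographic order with `x_1 > x_2 > ⋯ > x_n`. -/
def lexGT {n : ℕ} (a b : Fin n →₀ ℕ) : Prop :=
  ∃ i : Fin n, (∀ j : Fin n, j < i → a j = b j) ∧ b i < a i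

/-- `I` is a lexsegment ideal. -/
def IsLexsegment {K : Type} [Field K] {n : ℕ} (I : Ideal (MvPolynomial (Fin n) K)) : Prop :=
  IsMonomialIdeal I ∧ ∀ a b : Fin n →₀ ℕ, (monomial a (1 : K)) ∈ I → edeg b = edeg a →
    lexGT b a → (monomial b (1 : K)) ∈ I

/-- `I` is a squarefree lexsegment ideal. -/
def IsSqfreeLexsegment {K : Type} [Field K] {n : ℕ}
    (I : Ideal (MvPolynomial (Fin n) K)) : Prop :=
  IsSqfreeMonomialIdeal I ∧ ∀ a b : Fin n →₀ ℕ, IsSqfree a → IsSqfree b →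
    (monomial a (1 : K)) ∈ I → edeg b = edeg a → lexGT b a → (monomial b (1 : K)) ∈ I

/-- The minimal number of generators of an ideal. -/
def mu {K : Type} [Field K] {n : ℕ} (I : Ideal (MvPolynomial (Fin n) K)) : ℕ :=
  sInf {m | ∃ G : Finset (MvPolynomial (Fin n) K), G.card = m ∧ I = Ideal.span (G : Set _)}

/-- `ξ_k = ∑_{j=1}^k C(2j-1, j)`. -/
def xi (k : ℕ) : ℕ := ∑ j ∈ Finset.Icc 1 k, (2 * j - 1).choose j

/-- The Hilbert function of `I`: the `K`-dimension of the degree-`j` component of `I`. -/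
def hilb {K : Type} [Field K] {n : ℕ} (I : Ideal (MvPolynomial (Fin n) K)) (j : ℕ) : ℕ :=
  Module.finrank K ↥((Submodule.restrictScalars K I) ⊓ homogeneousSubmodule (Fin n) K j)

/-- The Hilbert function of `I` extended to all integer degrees. -/
def hilbZ {K : Type} [Field K] {n : ℕ} (I : Ideal (MvPolynomial (Fin n) K)) (j : ℤ) : ℕ :=
  if 0 ≤ j then hilb I j.toNat else 0

/-- The Hilbert function of a standard graded polynomial ring in `d` variables,
at degree `t ∈ ℤ`. -/
def polyHilb (d : ℕ) (t : ℤ) : ℕ :=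
  if t < 0 then 0 else if d = 0 then (if t = 0 then 1 else 0) else (t.toNat + (d - 1)).choose (d - 1)

/-- A (standard graded) Hilbert decomposition of `I` all of whose retracts are polynomial
rings in at least `k` variables: `I ≅ ⊕ᵢ Sᵢ(-sᵢ)` as graded `K`-vector spaces, where `Sᵢ`
is a graded algebra retract of `S`, i.e. a polynomial ring in `dd i ≥ k` variables. -/
def HilbertDecomp1 {K : Type} [Field K] {n : ℕ} (I : Ideal (MvPolynomial (Fin n) K))
    (k : ℕ) : Prop :=
  ∃ (ι : Type) (_ : Fintype ι) (dd : ι → ℕ) (s : ι → ℤ),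
    (∀ i, k ≤ dd i) ∧ ∀ j : ℤ, hilbZ I j = ∑ i, polyHilb (dd i) (j - s i)

/-- The Hilbert depth of `I` in the standard graded sense. -/
def hdepth1 {K : Type} [Field K] {n : ℕ} (I : Ideal (MvPolynomial (Fin n) K)) : ℕ∞ :=
  sSup {k : ℕ∞ | ∃ m : ℕ, HilbertDecomp1 I m ∧ k = m}

/-- The set of exponent vectors `u + ℕ^Z`, corresponding to the Stanley space `x^u K[Z]`. -/
def cone {n : ℕ} (u : Fin n →₀ ℕ) (Z : Finset (Fin n)) : Set (Fin n →₀ ℕ) :=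
  {a | (∀ j, u j ≤ a j) ∧ ∀ j ∉ Z, a j = u j}

/-- A Stanley decomposition, with all Stanley spaces of dimension at least `k`, of the
`ℤⁿ`-graded module whose monomial basis has exponent set `A`. -/
def StanleyPartN {n : ℕ} (A : Set (Fin n →₀ ℕ)) (k : ℕ) : Prop :=
  ∃ (ι : Type) (_ : Fintype ι) (u : ι → (Fin n →₀ ℕ)) (Z : ι → Finset (Fin n)),
    (∀ i, k ≤ (Z i).card) ∧ (∀ i, cone (u i) (Z i) ⊆ A) ∧
    (∀ a ∈ A, ∃! i, a ∈ cone (u i) (Z i))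

/-- The multigraded Stanley depth of the `ℤⁿ`-graded module whose monomial basis has
exponent set `A`. -/
def sdepthN {n : ℕ} (A : Set (Fin n →₀ ℕ)) : ℕ∞ :=
  sSup {k : ℕ∞ | ∃ m : ℕ, StanleyPartN A m ∧ k = m}

/-- A multigraded Hilbert decomposition of the monomial ideal `I`, with all retracts
polynomial rings in at least `k` variables: the multigraded Hilbert function of `I`
(which takes values 0 and 1) equals the sum of the multigraded Hilbert functions of
the shifted retracts `x^{u i} K[Z i]`. -/
def HilbertDecompN {K : Type} [Field K] {n : ℕ} (I : Ideal (MvPolynomial (Fin n) K))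
    (k : ℕ) : Prop :=
  ∃ (ι : Type) (_ : Fintype ι) (u : ι → (Fin n →₀ ℕ)) (Z : ι → Finset (Fin n)),
    (∀ i, k ≤ (Z i).card) ∧
    (∀ a : Fin n →₀ ℕ, (a ∈ expSet I ↔ ∃ i, a ∈ cone (u i) (Z i)) ∧
      (∀ i i', a ∈ cone (u i) (Z i) → a ∈ cone (u i') (Z i') → i = i'))

/-- The multigraded Hilbert depth of a monomial ideal `I`. -/
def hdepthN {K : Type} [Field K] {n : ℕ} (I : Ideal (MvPolynomial (Fin n) K)) : ℕ∞ :=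
  sSup {k : ℕ∞ | ∃ m : ℕ, HilbertDecompN I m ∧ k = m}

/-- The graded maximal ideal `(x_1, …, x_n)`. -/
def maxIdeal (K : Type) [Field K] (n : ℕ) : Ideal (MvPolynomial (Fin n) K) :=
  Ideal.span (Set.range X)

/-- The depth of a module `M` over `S = K[x_1,…,x_n]` with respect to the graded maximal
ideal: the supremum of lengths of `M`-regular sequences in `(x_1,…,x_n)`. -/
def mdepth (K : Type) [Field K] (n : ℕ) (M : Type)
    [AddCommGroup M] [Module (MvPolynomial (Fin n) K) M] : ℕ∞ :=
  sSup {k : ℕ∞ | ∃ rs : List (MvPolynomial (Fin n) K),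
    (∀ r ∈ rs, r ∈ maxIdeal K n) ∧ RingTheory.Sequence.IsRegular M rs ∧ k = rs.length}

/-- The quotient module `I/J` for ideals `J ≤ I`. -/
def quotMod {K : Type} [Field K] {n : ℕ} (I J : Ideal (MvPolynomial (Fin n) K)) : Type :=
  ↥I ⧸ (Submodule.comap (Submodule.subtype I) J)

instance {K : Type} [Field K] {n : ℕ} (I J : Ideal (MvPolynomial (Fin n) K)) :
    AddCommGroup (quotMod I J) := by unfold quotMod; infer_instance

instance {K : Type} [Field K] {n : ℕ} (I J : Ideal (MvPolynomial (Fin n) K)) :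
    Module (MvPolynomial (Fin n) K) (quotMod I J) := by unfold quotMod; infer_instance

/-- `ρ_j(I\J)`: the number of squarefree monomials of degree `j` in `I ∖ J`. -/
def rho {K : Type} [Field K] {n : ℕ} (I J : Ideal (MvPolynomial (Fin n) K)) (j : ℕ) : ℕ :=
  Set.ncard {a : Fin n →₀ ℕ | IsSqfree a ∧ edeg a = j ∧ a ∈ expSet I ∧ a ∉ expSet J}

/-- `ρ_j(I)`: the number of squarefree monomials of degree `j` in `I`. -/
def rhoI {K : Type} [Field K] {n : ℕ} (I : Ideal (MvPolynomial (Fin n) K)) (j : ℕ) : ℕ :=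
  Set.ncard {a : Fin n →₀ ℕ | IsSqfree a ∧ edeg a = j ∧ a ∈ expSet I}

/-- `I` is a stable monomial ideal. Here `j` plays the role of `m(u)`, the largest index of
a variable dividing `u = x^a`. -/
def IsStable {K : Type} [Field K] {n : ℕ} (I : Ideal (MvPolynomial (Fin n) K)) : Prop :=
  IsMonomialIdeal I ∧ ∀ a : Fin n →₀ ℕ, (monomial a (1 : K)) ∈ I →
    ∀ j : Fin n, a j ≠ 0 → (∀ l, j < l → a l = 0) → ∀ i, i < j →
      (monomial (a + Finsupp.single i 1 - Finsupp.single j 1) (1 : K)) ∈ I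

/-- `I` is a squarefree stable monomial ideal. -/
def IsSqfreeStable {K : Type} [Field K] {n : ℕ} (I : Ideal (MvPolynomial (Fin n) K)) : Prop :=
  IsSqfreeMonomialIdeal I ∧ ∀ a : Fin n →₀ ℕ, IsSqfree a → (monomial a (1 : K)) ∈ I →
    ∀ j : Fin n, a j ≠ 0 → (∀ l, j < l → a l = 0) → ∀ i, i < j → a i = 0 →
      (monomial (a + Finsupp.single i 1 - Finsupp.single j 1) (1 : K)) ∈ I

/-- `I` is a squarefree strongly stable monomial ideal. -/
def IsSqfreeStronglyStable {K : Type} [Field K] {n : ℕ}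
    (I : Ideal (MvPolynomial (Fin n) K)) : Prop :=
  IsSqfreeMonomialIdeal I ∧ ∀ a : Fin n →₀ ℕ, IsSqfree a → (monomial a (1 : K)) ∈ I →
    ∀ i : Fin n, a i ≠ 0 → ∀ j, j < i → a j = 0 →
      (monomial (a + Finsupp.single j 1 - Finsupp.single i 1) (1 : K)) ∈ I

/-- The exponent vectors of the minimal monomial generators of a monomial ideal:
the monomials of `I` minimal with respect to divisibility. -/
def minGens {K : Type} [Field K] {n : ℕ} (I : Ideal (MvPolynomial (Fin n) K)) :
    Set (Fin n →₀ ℕ) := {a | a ∈ expSet I ∧ ∀ b ∈ expSet I, b ≤ a → b = a}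

/-- `m(u)`: the largest index (1-based) of a variable dividing `x^a`; `0` if `a = 0`. -/
def mvar {n : ℕ} (a : Fin n →₀ ℕ) : ℕ := a.support.sup (fun i => (i : ℕ) + 1)

/-- `m(I) = max { m(u) : u ∈ G(I) }`. -/
def mIdeal {K : Type} [Field K] {n : ℕ} (I : Ideal (MvPolynomial (Fin n) K)) : ℕ :=
  sSup {m | ∃ a ∈ minGens I, m = mvar a}

open MvPolynomial

/-- The `K`-subspace `Aᵢ·xᵢ` of `S`, where `Aᵢ` is the subalgebra generated by `B`. -/
def stSpace {K : Type} [Field K] {n : ℕ} (B : Finset (MvPolynomial (Fin n) K))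
    (x : MvPolynomial (Fin n) K) : Submodule K (MvPolynomial (Fin n) K) :=
  (Subalgebra.toSubmodule (Algebra.adjoin K (B : Set (MvPolynomial (Fin n) K)))).map
    (LinearMap.mulLeft K x)

/-- A standard graded Stanley decomposition of the ideal `I` with all Stanley spaces of
depth at least `k`: a finite family of graded algebra retracts `Sᵢ = K[Bᵢ]` (generated by
`k ≤ |Bᵢ|` linearly independent linear forms) and homogeneous elements `xᵢ ∈ I` with
`Sᵢ ∩ ann(xᵢ) = 0`, such that `I = ⊕ᵢ Sᵢ xᵢ` as graded `K`-vector spaces. -/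
def StanleyDecomp1 {K : Type} [Field K] {n : ℕ} (I : Ideal (MvPolynomial (Fin n) K))
    (k : ℕ) : Prop :=
  ∃ (ι : Type) (_ : Fintype ι) (B : ι → Finset (MvPolynomial (Fin n) K))
    (x : ι → MvPolynomial (Fin n) K) (d : ι → ℕ),
      (∀ i, ∀ b ∈ B i, b ∈ homogeneousSubmodule (Fin n) K 1) ∧
      (∀ i, LinearIndependent K (fun b : (B i : Set (MvPolynomial (Fin n) K)) =>
        (b : MvPolynomial (Fin n) K))) ∧
      (∀ i, k ≤ (B i).card) ∧
      (∀ i, x i ∈ I) ∧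
      (∀ i, x i ∈ homogeneousSubmodule (Fin n) K (d i)) ∧
      (∀ i, ∀ a ∈ Algebra.adjoin K ((B i : Set (MvPolynomial (Fin n) K))),
        a * x i = 0 → a = 0) ∧
      (iSup (fun i => stSpace (B i) (x i)) = Submodule.restrictScalars K I) ∧
      (iSupIndep fun i => stSpace (B i) (x i))

/-- The standard graded Stanley depth of `I`. -/
def sdepth1 {K : Type} [Field K] {n : ℕ} (I : Ideal (MvPolynomial (Fin n) K)) : ℕ∞ :=
  sSup {k : ℕ∞ | ∃ m : ℕ, StanleyDecomp1 I m ∧ k = m}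

/-- The subspace `S₁ · V` of `S`. -/
def mulS1 {K : Type} [Field K] {n : ℕ} (V : Submodule K (MvPolynomial (Fin n) K)) :
    Submodule K (MvPolynomial (Fin n) K) :=
  Submodule.span K {p | ∃ l ∈ homogeneousSubmodule (Fin n) K 1, ∃ v ∈ V, p = l * v}

/-- A lexsegment set of monomials of degree `d`. -/
def IsLexSet {n : ℕ} (d : ℕ) (L : Set (Fin n →₀ ℕ)) : Prop :=
  (∀ a ∈ L, edeg a = d) ∧ ∀ a ∈ L, ∀ b : Fin n →₀ ℕ, edeg b = d → lexGT b a → b ∈ L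

/-- `V ⊆ S_d` is a Gotzmann space: `dim_K (S₁·V) = dim_K (S₁·lex(V))`, where `lex(V)` is
spanned by the lexsegment set of monomials of degree `d` of cardinality `dim_K V`. -/
def IsGotzmannSpace {K : Type} [Field K] {n : ℕ} (d : ℕ)
    (V : Submodule K (MvPolynomial (Fin n) K)) : Prop :=
  ∃ L : Finset (Fin n →₀ ℕ), IsLexSet (n := n) d (L : Set (Fin n →₀ ℕ)) ∧ L.card = Module.finrank K ↥V ∧
    Module.finrank K ↥(mulS1 V) =
      Module.finrank K ↥(mulS1 (Submodule.span K
        ((fun a => (monomial a (1 : K))) '' (L : Set (Fin n →₀ ℕ)))))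

/-- `I` is a homogeneous ideal in the standard grading. -/
def IsHomogeneousIdeal {K : Type} [Field K] {n : ℕ}
    (I : Ideal (MvPolynomial (Fin n) K)) : Prop :=
  ∀ p ∈ I, ∀ k : ℕ, homogeneousComponent k p ∈ I

/-- `I` is a Gotzmann ideal: each homogeneous component `I_k` is a Gotzmann space. -/
def IsGotzmannIdeal {K : Type} [Field K] {n : ℕ}
    (I : Ideal (MvPolynomial (Fin n) K)) : Prop :=
  IsHomogeneousIdeal I ∧ ∀ k : ℕ,
    IsGotzmannSpace k ((Submodule.restrictScalars K I) ⊓ homogeneousSubmodule (Fin n) K k)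

/-- `I` is generated by homogeneous elements of degree `d`. -/
def GenInDegHomog {K : Type} [Field K] {n : ℕ} (I : Ideal (MvPolynomial (Fin n) K))
    (d : ℕ) : Prop :=
  ∃ G : Set (MvPolynomial (Fin n) K), (∀ g ∈ G, g ∈ homogeneousSubmodule (Fin n) K d) ∧
    I = Ideal.span G

set_option linter.unusedSectionVars false

section Aux

variable {K : Type} [Field K] {n : ℕ}

instance homogSubFD (d : ℕ) : FiniteDimensional K (homogeneousSubmodule (Fin n) K d) := by
  apply Submodule.finiteDimensional_of_le (S₂ := restrictTotalDegree (Fin n) K d)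
  intro p hp
  rw [mem_restrictTotalDegree]
  exact ((mem_homogeneousSubmodule _ _).mp hp).totalDegree_le

lemma edeg_eq_degree (a : Fin n →₀ ℕ) : edeg a = Finsupp.degree a := by
  unfold edeg Finsupp.degree
  exact (Finset.sum_subset (Finset.subset_univ _)
    (fun i _ hi => Finsupp.notMem_support_iff.mp hi)).symm

lemma edeg_add (a b : Fin n →₀ ℕ) : edeg (a + b) = edeg a + edeg b := by
  simp [edeg, Finset.sum_add_distrib]

lemma edeg_single (i : Fin n) (k : ℕ) : edeg (Finsupp.single i k) = k := by
  simp [edeg, Finsupp.single_apply]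

lemma homog_edeg {p : MvPolynomial (Fin n) K} {e : ℕ}
    (hp : p ∈ homogeneousSubmodule (Fin n) K e) {a : Fin n →₀ ℕ}
    (ha : a ∈ p.support) : edeg a = e := by
  rw [edeg_eq_degree, Finsupp.degree_eq_weight_one]
  exact (mem_homogeneousSubmodule _ _).mp hp (MvPolynomial.mem_support_iff.mp ha)

/-- The ideal of polynomials all of whose monomials have degree at least `d`. -/
def lowIdeal (K : Type) [Field K] (n d : ℕ) : Ideal (MvPolynomial (Fin n) K) where
  carrier := {p | ∀ a ∈ p.support, d ≤ edeg a}
  zero_mem' := by simp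
  add_mem' := by
    intro p q hp hq a ha
    rcases Finset.mem_union.mp (MvPolynomial.support_add ha) with h | h
    exacts [hp a h, hq a h]
  smul_mem' := by
    intro c p hp a ha
    rw [smul_eq_mul] at ha
    obtain ⟨b, _, b', hb', rfl⟩ := Finset.mem_add.mp (MvPolynomial.support_mul c p ha)
    calc d ≤ edeg b' := hp b' hb'
    _ ≤ edeg (b + b') := by rw [edeg_add]; omega

lemma mem_lowIdeal_iff {d : ℕ} {p : MvPolynomial (Fin n) K} :
    p ∈ lowIdeal K n d ↔ ∀ a ∈ p.support, d ≤ edeg a := Iff.rfl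

lemma homog_mem_lowIdeal {d e : ℕ} (h : d ≤ e) {p : MvPolynomial (Fin n) K}
    (hp : p ∈ homogeneousSubmodule (Fin n) K e) : p ∈ lowIdeal K n d := by
  intro a ha
  rw [homog_edeg hp ha]; exact h

lemma span_le_lowIdeal {d : ℕ} {G : Set (MvPolynomial (Fin n) K)}
    (hG : ∀ g ∈ G, g ∈ homogeneousSubmodule (Fin n) K d) :
    Ideal.span G ≤ lowIdeal K n d := by
  rw [Ideal.span_le]; intro g hg; exact homog_mem_lowIdeal le_rfl (hG g hg)

lemma comp_eq_zero_of_lowIdeal {d j : ℕ} {p : MvPolynomial (Fin n) K}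
    (hp : p ∈ lowIdeal K n d) (hj : j < d) :
    homogeneousComponent j p = 0 := by
  apply homogeneousComponent_eq_zero'
  intro a ha
  have h2 := hp a ha
  rw [edeg_eq_degree] at h2
  omega

lemma comp_mul_homog (f g : MvPolynomial (Fin n) K) {e : ℕ}
    (hg : g ∈ homogeneousSubmodule (Fin n) K e) (k : ℕ) :
    homogeneousComponent (k + e) (f * g) = homogeneousComponent k f * g := by
  have hfg : ∀ i, homogeneousComponent i f * g ∈ homogeneousSubmodule (Fin n) K (i + e) :=
    fun i => (mem_homogeneousSubmodule _ _).mpr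
      ((homogeneousComponent_isHomogeneous i f).mul ((mem_homogeneousSubmodule _ _).mp hg))
  nth_rewrite 1 [← sum_homogeneousComponent f]
  rw [Finset.sum_mul, map_sum]
  have hterm : ∀ i ∈ Finset.range (f.totalDegree + 1),
      homogeneousComponent (k+e) (homogeneousComponent i f * g)
        = if i = k then homogeneousComponent k f * g else 0 := by
    intro i _
    rw [homogeneousComponent_of_mem (hfg i)]
    by_cases h : i = k
    · subst h; simp
    · rw [if_neg (by omega), if_neg h]
  rw [Finset.sum_congr rfl hterm, Finset.sum_ite_eq' _ k]
  split_ifs with hk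
  · rfl
  · rw [Finset.mem_range, not_lt] at hk
    rw [homogeneousComponent_eq_zero k f (by omega), zero_mul]

end Aux

section Aux2

variable {K : Type} [Field K] {n : ℕ}

lemma inf_eq_bot_of_lt {I : Ideal (MvPolynomial (Fin n) K)} {d : ℕ}
    (hgen : GenInDegHomog I d) {j : ℕ} (hj : j < d) :
    Submodule.restrictScalars K I ⊓ homogeneousSubmodule (Fin n) K j = ⊥ := by
  rw [eq_bot_iff]
  intro p hp
  rw [Submodule.mem_inf] at hp
  obtain ⟨hpI, hpj⟩ := hp
  obtain ⟨G, hGd, hIG⟩ := hgen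
  have hplow : p ∈ lowIdeal K n d := span_le_lowIdeal hGd (by rw [← hIG]; exact hpI)
  have h1 : homogeneousComponent j p = p := by
    rw [homogeneousComponent_of_mem hpj, if_pos rfl]
  rw [Submodule.mem_bot, ← h1, comp_eq_zero_of_lowIdeal hplow hj]

lemma hilb_eq_zero_of_lt {I : Ideal (MvPolynomial (Fin n) K)} {d : ℕ}
    (hgen : GenInDegHomog I d) {j : ℕ} (hj : j < d) : hilb I j = 0 := by
  rw [hilb, inf_eq_bot_of_lt hgen hj, finrank_bot]

lemma mem_mulS1_gen {V : Submodule K (MvPolynomial (Fin n) K)} {l v : MvPolynomial (Fin n) K}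
    (hl : l ∈ homogeneousSubmodule (Fin n) K 1) (hv : v ∈ V) : l * v ∈ mulS1 V :=
  Submodule.subset_span ⟨l, hl, v, hv, rfl⟩

lemma mul_mem_mulS1 {I : Ideal (MvPolynomial (Fin n) K)} {q v : MvPolynomial (Fin n) K} {e c : ℕ}
    (hq : q ∈ homogeneousSubmodule (Fin n) K (e+1)) (hvI : v ∈ I)
    (hvc : v ∈ homogeneousSubmodule (Fin n) K c) :
    q * v ∈ mulS1 (Submodule.restrictScalars K I ⊓ homogeneousSubmodule (Fin n) K (e + c)) := by
  nth_rewrite 1 [q.as_sum]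
  rw [Finset.sum_mul]
  apply Submodule.sum_mem
  intro a ha
  have hdeg : edeg a = e + 1 := homog_edeg hq ha
  have hane : a ≠ 0 := by
    intro h
    rw [h] at hdeg
    simp [edeg] at hdeg
  obtain ⟨i, hi⟩ := Finsupp.ne_iff.mp hane
  have hi1 : 1 ≤ a i := by simpa [Nat.one_le_iff_ne_zero] using hi
  set a' := a - Finsupp.single i 1 with ha'
  have hsum : a' + Finsupp.single i 1 = a := by
    ext j
    simp only [ha', Finsupp.add_apply, Finsupp.tsub_apply, Finsupp.single_apply]
    by_cases hji : i = j
    · subst hji; simp; omega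
    · simp [hji]
  have hdega' : edeg a' = e := by
    have h2 : edeg a' + edeg (Finsupp.single i 1) = e + 1 := by
      rw [← edeg_add, hsum, hdeg]
    rw [edeg_single] at h2
    omega
  have hmono : (monomial a (MvPolynomial.coeff a q)) * v
      = X i * ((monomial a' (MvPolynomial.coeff a q)) * v) := by
    rw [← mul_assoc]
    congr 1
    show _ = monomial (Finsupp.single i 1) (1:K) * _
    rw [monomial_mul, one_mul, add_comm, hsum]
  rw [hmono]
  apply mem_mulS1_gen ((mem_homogeneousSubmodule _ _).mpr (isHomogeneous_X K i))
  rw [Submodule.mem_inf]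
  constructor
  · rw [Submodule.restrictScalars_mem]
    exact I.mul_mem_left _ hvI
  · exact (mem_homogeneousSubmodule _ _).mpr
      ((isHomogeneous_monomial _ (by rw [← edeg_eq_degree]; exact hdega')).mul
        ((mem_homogeneousSubmodule _ _).mp hvc))

lemma inf_succ_eq_mulS1 {I : Ideal (MvPolynomial (Fin n) K)} {d : ℕ}
    (hgen : GenInDegHomog I d) {j : ℕ} (hj : d ≤ j) :
    Submodule.restrictScalars K I ⊓ homogeneousSubmodule (Fin n) K (j+1)
      = mulS1 (Submodule.restrictScalars K I ⊓ homogeneousSubmodule (Fin n) K j) := by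
  obtain ⟨G, hGd, hIG⟩ := hgen
  apply le_antisymm
  · intro p hp
    rw [Submodule.mem_inf] at hp
    obtain ⟨hpI, hpj⟩ := hp
    have hspan : p ∈ Submodule.span (MvPolynomial (Fin n) K) G := by
      rw [Submodule.restrictScalars_mem, hIG] at hpI
      exact hpI
    obtain ⟨m, f, g, rfl⟩ := Submodule.mem_span_set'.mp hspan
    have hps : homogeneousComponent (j+1) (∑ i, f i • (g i : MvPolynomial (Fin n) K))
        = ∑ i, f i • (g i : MvPolynomial (Fin n) K) := by
      rw [homogeneousComponent_of_mem hpj, if_pos rfl]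
    rw [← hps, map_sum]
    apply Submodule.sum_mem
    intro i _
    have hcomp : homogeneousComponent (j+1) (f i * (g i : MvPolynomial (Fin n) K))
        = homogeneousComponent (j - d + 1) (f i) * (g i : MvPolynomial (Fin n) K) := by
      have h1 : j + 1 = (j - d + 1) + d := by omega
      rw [h1, comp_mul_homog _ _ (hGd _ (g i).2)]
    rw [smul_eq_mul, hcomp]
    have hgI : (g i : MvPolynomial (Fin n) K) ∈ I := by
      rw [hIG]; exact Ideal.subset_span (g i).2
    have hmem := mul_mem_mulS1 (q := homogeneousComponent (j - d + 1) (f i)) (e := j - d) (c := d)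
      ((mem_homogeneousSubmodule _ _).mpr (homogeneousComponent_isHomogeneous _ _)) hgI
      (hGd _ (g i).2)
    have hecd : j - d + d = j := by omega
    rwa [hecd] at hmem
  · rw [mulS1, Submodule.span_le]
    rintro p ⟨l, hl, v, hv, rfl⟩
    rw [Submodule.mem_inf] at hv
    obtain ⟨hvI, hvj⟩ := hv
    rw [SetLike.mem_coe, Submodule.mem_inf]
    constructor
    · rw [Submodule.restrictScalars_mem]
      rw [Submodule.restrictScalars_mem] at hvI
      exact I.mul_mem_left l hvI
    · have := ((mem_homogeneousSubmodule _ _).mp hl).mul ((mem_homogeneousSubmodule _ _).mp hvj)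
      rw [add_comm] at this
      exact (mem_homogeneousSubmodule _ _).mpr this

lemma hilb_succ_eq {I : Ideal (MvPolynomial (Fin n) K)} {d : ℕ}
    (hgen : GenInDegHomog I d) {j : ℕ} (hj : d ≤ j) :
    hilb I (j+1) = Module.finrank K
      ↥(mulS1 (Submodule.restrictScalars K I ⊓ homogeneousSubmodule (Fin n) K j)) := by
  rw [hilb, inf_succ_eq_mulS1 hgen hj]

end Aux2

section Aux3

variable {K : Type} [Field K] {n : ℕ}

lemma hilb_le_of_span {I : Ideal (MvPolynomial (Fin n) K)} {d : ℕ}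
    (hgen : GenInDegHomog I d) (G : Finset (MvPolynomial (Fin n) K))
    (hIG : I = Ideal.span (G : Set _)) : hilb I d ≤ G.card := by
  classical
  set W := Submodule.span K (↑(G.image (homogeneousComponent d)) : Set (MvPolynomial (Fin n) K))
    with hW
  have hVW : Submodule.restrictScalars K I ⊓ homogeneousSubmodule (Fin n) K d ≤ W := by
    intro p hp
    rw [Submodule.mem_inf] at hp
    obtain ⟨hpI, hpd⟩ := hp
    have hlow : ∀ g ∈ (G : Set (MvPolynomial (Fin n) K)), g ∈ lowIdeal K n d := by
      obtain ⟨G₀, hG₀, hIG₀⟩ := hgen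
      intro g hg
      exact span_le_lowIdeal hG₀ (by rw [← hIG₀, hIG]; exact Ideal.subset_span hg)
    have hspan : p ∈ Submodule.span (MvPolynomial (Fin n) K) (G : Set _) := by
      rw [Submodule.restrictScalars_mem, hIG] at hpI
      exact hpI
    obtain ⟨m', f, g, rfl⟩ := Submodule.mem_span_set'.mp hspan
    have key : ∀ i, homogeneousComponent d (f i * (g i : MvPolynomial (Fin n) K))
        = MvPolynomial.coeff 0 (f i) • homogeneousComponent d (g i : MvPolynomial (Fin n) K) := by
      intro i
      have hglow : (g i : MvPolynomial (Fin n) K) ∈ lowIdeal K n d := hlow _ (g i).2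
      set r := (g i : MvPolynomial (Fin n) K) - homogeneousComponent d (g i : MvPolynomial (Fin n) K) with hr
      have hrlow : r ∈ lowIdeal K n (d+1) := by
        intro a ha
        by_contra hlt
        push_neg at hlt
        have hca : MvPolynomial.coeff a r ≠ 0 := MvPolynomial.mem_support_iff.mp ha
        have hcr : MvPolynomial.coeff a r = MvPolynomial.coeff a (g i : MvPolynomial (Fin n) K)
            - (if Finsupp.degree a = d then MvPolynomial.coeff a (g i : MvPolynomial (Fin n) K) else 0) := by
          rw [hr, MvPolynomial.coeff_sub, coeff_homogeneousComponent]
        by_cases hda : Finsupp.degree a = d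
        · rw [if_pos hda] at hcr
          simp at hcr
          exact hca hcr
        · rw [if_neg hda] at hcr
          rw [sub_zero] at hcr
          have hag : a ∈ (g i : MvPolynomial (Fin n) K).support :=
            MvPolynomial.mem_support_iff.mpr (by rw [← hcr]; exact hca)
          have h1 := hglow a hag
          rw [edeg_eq_degree] at *
          omega
      have hfr : homogeneousComponent d (f i * r) = 0 :=
        comp_eq_zero_of_lowIdeal ((lowIdeal K n (d+1)).mul_mem_left (f i) hrlow) (lt_add_one d)
      have hsplit : f i * (g i : MvPolynomial (Fin n) K)
          = f i * homogeneousComponent d (g i : MvPolynomial (Fin n) K) + f i * r := by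
        rw [hr]; ring
      rw [hsplit, map_add, hfr, add_zero]
      have hcm := comp_mul_homog (f i) (homogeneousComponent d (g i : MvPolynomial (Fin n) K))
        ((mem_homogeneousSubmodule _ _).mpr (homogeneousComponent_isHomogeneous d _)) 0
      rw [zero_add] at hcm
      rw [hcm, homogeneousComponent_zero, ← MvPolynomial.smul_eq_C_mul]
    have hps : homogeneousComponent d (∑ i, f i • (g i : MvPolynomial (Fin n) K))
        = ∑ i, f i • (g i : MvPolynomial (Fin n) K) := by
      rw [homogeneousComponent_of_mem hpd, if_pos rfl]
    rw [← hps, map_sum]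
    apply Submodule.sum_mem
    intro i _
    rw [smul_eq_mul, key i]
    apply Submodule.smul_mem
    apply Submodule.subset_span
    simp only [Finset.coe_image, Set.mem_image]
    exact ⟨g i, (g i).2, rfl⟩
  haveI : FiniteDimensional K ↥W := FiniteDimensional.span_finset _ _
  calc hilb I d ≤ Module.finrank K ↥W := Submodule.finrank_mono hVW
  _ ≤ (G.image (homogeneousComponent d)).card := finrank_span_finset_le_card _
  _ ≤ G.card := Finset.card_image_le

lemma hilb_eq_mu {I : Ideal (MvPolynomial (Fin n) K)} {d : ℕ}
    (hgen : GenInDegHomog I d) : hilb I d = mu I := by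
  classical
  apply le_antisymm
  · apply le_csInf
    · obtain ⟨T, hT⟩ := IsNoetherian.noetherian I
      exact ⟨T.card, T, rfl, hT.symm⟩
    · rintro m ⟨G, hGcard, hIG⟩
      rw [← hGcard]
      exact hilb_le_of_span hgen G hIG
  · set V := Submodule.restrictScalars K I ⊓ homogeneousSubmodule (Fin n) K d with hV
    haveI : FiniteDimensional K ↥V :=
      Submodule.finiteDimensional_of_le (inf_le_right : V ≤ homogeneousSubmodule (Fin n) K d)
    set b := Module.finBasis K ↥V with hb
    have hinj : Function.Injective (fun i => ((b i : ↥V) : MvPolynomial (Fin n) K)) :=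
      fun i j h => b.injective (Subtype.coe_injective h)
    set T : Finset (MvPolynomial (Fin n) K) :=
      Finset.image (fun i => ((b i : ↥V) : MvPolynomial (Fin n) K)) Finset.univ with hT
    have hcard : T.card = Module.finrank K ↥V := by
      rw [hT, Finset.card_image_of_injective _ hinj, Finset.card_univ, Fintype.card_fin]
    have hTspan : I = Ideal.span (T : Set _) := by
      apply le_antisymm
      · obtain ⟨G₀, hG₀d, hIG₀⟩ := hgen
        conv_lhs => rw [hIG₀]
        rw [Ideal.span_le]
        intro g hg
        have hgV : g ∈ V := by
          rw [hV, Submodule.mem_inf]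
          refine ⟨?_, hG₀d g hg⟩
          rw [Submodule.restrictScalars_mem, hIG₀]
          exact Ideal.subset_span hg
        have h1 : (⟨g, hgV⟩ : ↥V) ∈ Submodule.span K (Set.range b) := by
          rw [b.span_eq]; trivial
        have h2 : g ∈ Submodule.map V.subtype (Submodule.span K (Set.range b)) :=
          ⟨_, h1, rfl⟩
        rw [Submodule.map_span, ← Set.range_comp] at h2
        have h3 : Submodule.span K (Set.range (V.subtype ∘ b))
            ≤ Submodule.restrictScalars K (Ideal.span (T : Set _)) := by
          rw [Submodule.span_le]
          rintro x ⟨i, rfl⟩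
          apply Ideal.subset_span
          rw [hT]
          simp only [Finset.coe_image, Set.mem_image, Finset.mem_coe, Finset.mem_univ]
          exact ⟨i, trivial, rfl⟩
        exact h3 h2
      · rw [Ideal.span_le]
        intro x hx
        rw [hT] at hx
        simp only [Finset.coe_image, Set.mem_image, Finset.mem_coe, Finset.mem_univ] at hx
        obtain ⟨i, _, rfl⟩ := hx
        have hm : ((b i : ↥V) : MvPolynomial (Fin n) K)
            ∈ Submodule.restrictScalars K I ⊓ homogeneousSubmodule (Fin n) K d := (b i).2
        exact (Submodule.mem_inf.mp hm).1
    exact Nat.sInf_le ⟨T, hcard, hTspan⟩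

end Aux3

section Aux4

variable {K : Type} [Field K] {n : ℕ}

lemma lex_trichotomy {a b : Fin n →₀ ℕ} (hab : a ≠ b) : lexGT a b ∨ lexGT b a := by
  classical
  have hne : (Finset.univ.filter (fun i => a i ≠ b i)).Nonempty := by
    by_contra h
    rw [Finset.not_nonempty_iff_eq_empty] at h
    apply hab
    ext i
    by_contra hi
    have : i ∈ Finset.univ.filter (fun i => a i ≠ b i) := Finset.mem_filter.mpr ⟨Finset.mem_univ i, hi⟩
    rw [h] at this
    exact absurd this (Finset.notMem_empty i)
  set i := Finset.min' _ hne with hi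
  have hmem : a i ≠ b i := (Finset.mem_filter.mp (Finset.min'_mem _ hne)).2
  have hj : ∀ j, j < i → a j = b j := by
    intro j hji
    by_contra hj
    exact absurd (Finset.min'_le _ j (Finset.mem_filter.mpr ⟨Finset.mem_univ j, hj⟩))
      (not_le.mpr hji)
  rcases lt_or_gt_of_ne hmem with h | h
  · exact Or.inr ⟨i, fun j hj' => (hj j hj').symm, h⟩
  · exact Or.inl ⟨i, hj, h⟩

lemma lexset_unique {d : ℕ} {L₁ L₂ : Finset (Fin n →₀ ℕ)}
    (h₁ : IsLexSet d (L₁ : Set (Fin n →₀ ℕ))) (h₂ : IsLexSet d (L₂ : Set (Fin n →₀ ℕ)))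
    (hc : L₁.card = L₂.card) : L₁ = L₂ := by
  by_contra hne
  have h12 : ¬ L₁ ⊆ L₂ := fun h => hne (Finset.eq_of_subset_of_card_le h hc.ge)
  have h21 : ¬ L₂ ⊆ L₁ := fun h => hne ((Finset.eq_of_subset_of_card_le h hc.le).symm)
  obtain ⟨a, ha1, ha2⟩ := Finset.not_subset.mp h12
  obtain ⟨b, hb2, hb1⟩ := Finset.not_subset.mp h21
  have hab : a ≠ b := fun h => ha2 (h ▸ hb2)
  rcases lex_trichotomy hab with h | h
  · exact ha2 (h₂.2 b hb2 a (h₁.1 a ha1) h)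
  · exact hb1 (h₁.2 a ha1 b (h₂.1 b hb2) h)

variable [NeZero n]

lemma shift_lexset {d : ℕ} {L : Finset (Fin n →₀ ℕ)} (h : IsLexSet d (L : Set (Fin n →₀ ℕ))) :
    IsLexSet (d+1) ((L.image (· + Finsupp.single (0 : Fin n) 1) : Finset (Fin n →₀ ℕ)) :
      Set (Fin n →₀ ℕ)) := by
  classical
  constructor
  · intro a' ha'
    rw [Finset.coe_image, Set.mem_image] at ha'
    obtain ⟨a, ha, rfl⟩ := ha'
    rw [edeg_add, edeg_single, h.1 a ha]
  · intro a' ha' b hbdeg hlex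
    rw [Finset.coe_image, Set.mem_image] at ha'
    obtain ⟨a, ha, rfl⟩ := ha'
    obtain ⟨i, hji, hlt⟩ := hlex
    have hb0 : 1 ≤ b 0 := by
      rcases eq_or_ne i 0 with hi0 | hi0
      · subst hi0
        simp only [Finsupp.add_apply, Finsupp.single_apply, if_pos rfl] at hlt
        omega
      · have h0i : (0 : Fin n) < i := (Fin.zero_le i).lt_of_ne (Ne.symm hi0)
        have h00 := hji 0 h0i
        simp at h00
        omega
    set b' := b - Finsupp.single (0 : Fin n) 1 with hb'
    have hbsum : b' + Finsupp.single (0 : Fin n) 1 = b := by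
      ext j
      simp only [hb', Finsupp.add_apply, Finsupp.tsub_apply, Finsupp.single_apply]
      by_cases hj0 : (0 : Fin n) = j
      · subst hj0; simp; omega
      · simp [hj0]
    have hbdeg' : edeg b' = d := by
      have := edeg_add b' (Finsupp.single (0 : Fin n) 1)
      rw [hbsum, edeg_single, hbdeg] at this
      omega
    have hblex : lexGT b' a := by
      refine ⟨i, ?_, ?_⟩
      · intro j hjlt
        have h1 := hji j hjlt
        have h2 : b' j = b j - Finsupp.single (0 : Fin n) 1 j := by
          rw [hb', Finsupp.tsub_apply]
        rw [h2, h1]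
        simp [Finsupp.add_apply]
      · have h2 : b' i = b i - Finsupp.single (0 : Fin n) 1 i := by
          rw [hb', Finsupp.tsub_apply]
        rw [Finsupp.add_apply] at hlt
        have h4 : Finsupp.single (0 : Fin n) 1 i ≤ 1 := by
          simp [Finsupp.single_apply]
          split <;> omega
        rcases eq_or_ne i 0 with hi0 | hi0
        · subst hi0
          simp only [Finsupp.single_apply, if_pos rfl] at hlt h2 ⊢
          omega
        · have h5 : Finsupp.single (0 : Fin n) 1 i = 0 := by
            simp [Finsupp.single_apply, Ne.symm hi0]
          rw [h5] at h2 hlt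
          omega
    have hbL : b' ∈ L := h.2 a (by exact_mod_cast ha) b' hbdeg' hblex
    rw [Finset.coe_image, Set.mem_image]
    exact ⟨b', by exact_mod_cast hbL, hbsum⟩

lemma shift_card (L : Finset (Fin n →₀ ℕ)) :
    (L.image (· + Finsupp.single (0 : Fin n) 1)).card = L.card := by
  classical
  apply Finset.card_image_of_injective
  intro a b hab
  ext j
  have := DFunLike.congr_fun hab j
  simp only [Finsupp.add_apply] at this
  omega

lemma span_shift (L : Finset (Fin n →₀ ℕ)) :
    Submodule.span K ((fun a => (monomial a (1:K))) ''
        ((L.image (· + Finsupp.single (0 : Fin n) 1) : Finset (Fin n →₀ ℕ)) : Set (Fin n →₀ ℕ)))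
      = Submodule.map (LinearMap.mulLeft K (X (0 : Fin n) : MvPolynomial (Fin n) K))
        (Submodule.span K ((fun a => (monomial a (1:K))) '' (L : Set (Fin n →₀ ℕ)))) := by
  classical
  rw [Submodule.map_span, Finset.coe_image, ← Set.image_comp, ← Set.image_comp]
  congr 1
  apply Set.image_congr
  intro a _
  show monomial (a + Finsupp.single (0 : Fin n) 1) (1:K) = X (0 : Fin n) * monomial a 1
  show _ = monomial (Finsupp.single (0 : Fin n) 1) (1:K) * monomial a 1
  rw [monomial_mul, one_mul, add_comm]

lemma mulS1_map (x : MvPolynomial (Fin n) K) (W : Submodule K (MvPolynomial (Fin n) K)) :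
    mulS1 (Submodule.map (LinearMap.mulLeft K x) W)
      = Submodule.map (LinearMap.mulLeft K x) (mulS1 W) := by
  rw [mulS1, mulS1, Submodule.map_span]
  congr 1
  ext p
  constructor
  · rintro ⟨l, hl, v, ⟨w, hw, rfl⟩, rfl⟩
    refine ⟨l * w, ⟨l, hl, w, hw, rfl⟩, ?_⟩
    simp only [LinearMap.mulLeft_apply]
    ring
  · rintro ⟨q, ⟨l, hl, w, hw, rfl⟩, rfl⟩
    refine ⟨l, hl, x * w, ⟨w, hw, rfl⟩, ?_⟩
    simp only [LinearMap.mulLeft_apply]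
    ring

lemma finrank_map_mulLeft_X (W : Submodule K (MvPolynomial (Fin n) K)) :
    Module.finrank K ↥(Submodule.map (LinearMap.mulLeft K (X (0 : Fin n) : MvPolynomial (Fin n) K)) W)
      = Module.finrank K ↥W := by
  have hinj : Function.Injective (LinearMap.mulLeft K (X (0 : Fin n) : MvPolynomial (Fin n) K)) :=
    fun p q h => mul_left_cancel₀ (MvPolynomial.X_ne_zero (0 : Fin n)) h
  exact (Submodule.equivMapOfInjective _ hinj W).finrank_eq.symm

lemma finrank_mulS1_shift (L : Finset (Fin n →₀ ℕ)) :
    Module.finrank K ↥(mulS1 (Submodule.span K ((fun a => (monomial a (1:K))) ''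
        ((L.image (· + Finsupp.single (0 : Fin n) 1) : Finset (Fin n →₀ ℕ)) : Set (Fin n →₀ ℕ)))))
      = Module.finrank K ↥(mulS1 (Submodule.span K
          ((fun a => (monomial a (1:K))) '' (L : Set (Fin n →₀ ℕ))))) := by
  rw [span_shift, mulS1_map, finrank_map_mulLeft_X]

lemma shift_iter (e : ℕ) {d : ℕ} (L : Finset (Fin n →₀ ℕ))
    (h : IsLexSet d (L : Set (Fin n →₀ ℕ))) :
    ∃ L' : Finset (Fin n →₀ ℕ), IsLexSet (d + e) (L' : Set (Fin n →₀ ℕ)) ∧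
      L'.card = L.card ∧
      Module.finrank K ↥(mulS1 (Submodule.span K
          ((fun a => (monomial a (1:K))) '' (L' : Set (Fin n →₀ ℕ)))))
        = Module.finrank K ↥(mulS1 (Submodule.span K
          ((fun a => (monomial a (1:K))) '' (L : Set (Fin n →₀ ℕ))))) := by
  induction e with
  | zero => exact ⟨L, h, rfl, rfl⟩
  | succ e ih =>
    obtain ⟨L', hL', hcard, hrank⟩ := ih
    refine ⟨L'.image (· + Finsupp.single (0 : Fin n) 1), ?_, ?_, ?_⟩
    · have := shift_lexset hL'
      rwa [show d + (e+1) = (d + e) + 1 by omega]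
    · rw [shift_card, hcard]
    · rw [finrank_mulS1_shift (K := K), hrank]

end Aux4

section Aux5

variable {K : Type} [Field K] {n : ℕ}

lemma hilb_shift_main [NeZero n] {d d' : ℕ} {I I' : Ideal (MvPolynomial (Fin n) K)}
    (hG : IsGotzmannIdeal I) (hG' : IsGotzmannIdeal I')
    (hgen : GenInDegHomog I d) (hgen' : GenInDegHomog I' d') (hdd : d' ≤ d)
    (hmu : mu I = mu I') :
    ∀ δ : ℕ, hilb I (d + δ) = hilb I' (d' + δ) := by
  intro δ
  induction δ with
  | zero =>
    rw [Nat.add_zero, Nat.add_zero, hilb_eq_mu hgen, hilb_eq_mu hgen', hmu]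
  | succ δ ih =>
    obtain ⟨L, hLlex, hLcard, hLrank⟩ := hG.2 (d + δ)
    obtain ⟨L', hL'lex, hL'card, hL'rank⟩ := hG'.2 (d' + δ)
    obtain ⟨L'', hL''lex, hL''card, hL''rank⟩ := shift_iter (K := K) (d - d') L' hL'lex
    have heq : d' + δ + (d - d') = d + δ := by omega
    rw [heq] at hL''lex
    have hcards : L''.card = L.card := by
      rw [hL''card, hL'card, hLcard]
      exact (ih.symm : hilb I' (d' + δ) = hilb I (d + δ))
    have hLL : L'' = L := lexset_unique hL''lex hLlex hcards
    have h1 : hilb I (d + (δ+1)) = Module.finrank K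
        ↥(mulS1 (Submodule.restrictScalars K I ⊓ homogeneousSubmodule (Fin n) K (d + δ))) := by
      rw [show d + (δ+1) = (d + δ) + 1 by omega]
      exact hilb_succ_eq hgen (Nat.le_add_right d δ)
    have h2 : hilb I' (d' + (δ+1)) = Module.finrank K
        ↥(mulS1 (Submodule.restrictScalars K I' ⊓ homogeneousSubmodule (Fin n) K (d' + δ))) := by
      rw [show d' + (δ+1) = (d' + δ) + 1 by omega]
      exact hilb_succ_eq hgen' (Nat.le_add_right d' δ)
    rw [h1, h2, hLrank, hL'rank, ← hL''rank, hLL]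

end Aux5

section Aux6

variable {K : Type} [Field K] {n : ℕ}

lemma hilbertDecomp1_of_shift {I I' : Ideal (MvPolynomial (Fin n) K)} (e : ℕ)
    (h : ∀ j : ℤ, hilbZ I j = hilbZ I' (j - (e:ℤ))) {m : ℕ} :
    HilbertDecomp1 I' m → HilbertDecomp1 I m := by
  rintro ⟨ι, hι, dd, s, hdd, hsum⟩
  refine ⟨ι, hι, dd, fun i => s i + e, hdd, fun j => ?_⟩
  rw [h j, hsum (j - e)]
  apply Finset.sum_congr rfl
  intro i _
  congr 1
  ring

lemma hdepth1_congr {I I' : Ideal (MvPolynomial (Fin n) K)} (e : ℕ)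
    (h : ∀ j : ℤ, hilbZ I j = hilbZ I' (j - (e:ℤ))) : hdepth1 I = hdepth1 I' := by
  have h' : ∀ j : ℤ, hilbZ I' j = hilbZ I (j + (e:ℤ)) := by
    intro j
    rw [h (j + e)]
    congr 1
    ring
  unfold hdepth1
  congr 1
  ext k
  constructor
  · rintro ⟨m, hm, rfl⟩
    refine ⟨m, ?_, rfl⟩
    obtain ⟨ι, hι, dd, s, hdd, hsum⟩ := hm
    refine ⟨ι, hι, dd, fun i => s i - e, hdd, fun j => ?_⟩
    rw [h' j, hsum (j + e)]
    apply Finset.sum_congr rfl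
    intro i _
    congr 1
    ring
  · rintro ⟨m, hm, rfl⟩
    exact ⟨m, hilbertDecomp1_of_shift e h hm, rfl⟩

lemma hilbZ_shift_of {I I' : Ideal (MvPolynomial (Fin n) K)} {d d' : ℕ} (hdd : d' ≤ d)
    (hlow : ∀ j, j < d → hilb I j = 0) (hlow' : ∀ j, j < d' → hilb I' j = 0)
    (hsh : ∀ δ : ℕ, hilb I (d + δ) = hilb I' (d' + δ)) :
    ∀ j : ℤ, hilbZ I j = hilbZ I' (j - ((d - d' : ℕ) : ℤ)) := by
  intro j
  unfold hilbZ
  by_cases h0 : 0 ≤ j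
  · rw [if_pos h0]
    by_cases h1 : ((d:ℤ)) ≤ j
    · have h2 : 0 ≤ j - ((d - d':ℕ):ℤ) := by omega
      rw [if_pos h2]
      have hδ : j.toNat = d + (j.toNat - d) := by omega
      have hδ' : (j - ((d-d':ℕ):ℤ)).toNat = d' + (j.toNat - d) := by omega
      rw [hδ, hδ', hsh (j.toNat - d)]
    · have hIl : hilb I j.toNat = 0 := hlow _ (by omega)
      rw [hIl]
      split_ifs with h2
      · exact (hlow' _ (by omega)).symm
      · rfl
  · rw [if_neg h0, if_neg (by omega)]

lemma series_shift_of {I I' : Ideal (MvPolynomial (Fin n) K)} {d d' : ℕ} (hdd : d' ≤ d)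
    (hlow : ∀ j, j < d → hilb I j = 0) (hlow' : ∀ j, j < d' → hilb I' j = 0)
    (hsh : ∀ δ : ℕ, hilb I (d + δ) = hilb I' (d' + δ)) :
    (PowerSeries.mk fun j => (hilb I j)) =
      (PowerSeries.X : PowerSeries ℕ) ^ (d - d') * PowerSeries.mk fun j => hilb I' j := by
  ext j
  rw [PowerSeries.coeff_mk, mul_comm, PowerSeries.coeff_mul_X_pow']
  split_ifs with h
  · rw [PowerSeries.coeff_mk]
    by_cases h1 : d ≤ j
    · have e2 : j - (d - d') = d' + (j - d) := by omega
      rw [e2]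
      conv_lhs => rw [show j = d + (j - d) by omega]
      exact hsh (j - d)
    · rw [hlow j (by omega), hlow' (j - (d - d')) (by omega)]
  · exact hlow j (by omega)

lemma homogSub_eq_bot_of_pos {d : ℕ} (hn : n = 0) (hd : 0 < d) :
    homogeneousSubmodule (Fin n) K d = ⊥ := by
  subst hn
  rw [eq_bot_iff]
  intro p hp
  rw [Submodule.mem_bot]
  ext a
  rw [MvPolynomial.coeff_zero]
  by_contra hc
  have h1 := homog_edeg hp (MvPolynomial.mem_support_iff.mpr hc)
  have h2 : edeg a = 0 := by simp [edeg]
  omega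

lemma ideal_eq_bot_of (hn : n = 0) {I : Ideal (MvPolynomial (Fin n) K)} {d : ℕ} (hd : 0 < d)
    (hgen : GenInDegHomog I d) : I = ⊥ := by
  obtain ⟨G, hGd, hIG⟩ := hgen
  rw [hIG, eq_bot_iff, Ideal.span_le]
  intro g hg
  have hgb := hGd g hg
  rw [homogSub_eq_bot_of_pos hn hd] at hgb
  simpa using hgb

lemma mu_bot : mu (⊥ : Ideal (MvPolynomial (Fin n) K)) = 0 := by
  have h0 : (0:ℕ) ∈ {m | ∃ G : Finset (MvPolynomial (Fin n) K),
      G.card = m ∧ (⊥ : Ideal (MvPolynomial (Fin n) K)) = Ideal.span (G : Set _)} :=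
    ⟨∅, Finset.card_empty, by simp⟩
  exact Nat.le_zero.mp (Nat.sInf_le h0)

lemma eq_bot_of_mu_eq_zero {I : Ideal (MvPolynomial (Fin n) K)} (h : mu I = 0) : I = ⊥ := by
  rw [mu] at h
  have hne : {m | ∃ G : Finset (MvPolynomial (Fin n) K),
      G.card = m ∧ I = Ideal.span (G : Set _)}.Nonempty := by
    obtain ⟨T, hT⟩ := IsNoetherian.noetherian I
    exact ⟨T.card, T, rfl, hT.symm⟩
  have h0 := Nat.sInf_mem hne
  rw [h] at h0
  obtain ⟨G, hG0, hIG⟩ := h0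
  rw [Finset.card_eq_zero] at hG0
  subst hG0
  rw [hIG]
  simp

lemma hilb_bot (j : ℕ) : hilb (⊥ : Ideal (MvPolynomial (Fin n) K)) j = 0 := by
  rw [hilb, Submodule.restrictScalars_bot, bot_inf_eq, finrank_bot]

lemma ideal_eq_top_of_ne_bot (hn : n = 0) {I : Ideal (MvPolynomial (Fin n) K)} (h : I ≠ ⊥) :
    I = ⊤ := by
  subst hn
  obtain ⟨p, hpI, hp0⟩ := Submodule.exists_mem_ne_zero_of_ne_bot h
  have hC : p = MvPolynomial.C (MvPolynomial.coeff 0 p) := MvPolynomial.eq_C_of_isEmpty p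
  have hc0 : MvPolynomial.coeff 0 p ≠ 0 := by
    intro h0
    apply hp0
    rw [hC, h0, map_zero]
  apply Ideal.eq_top_of_isUnit_mem I hpI
  rw [hC]
  exact (isUnit_iff_ne_zero.mpr hc0).map MvPolynomial.C

end Aux6

/-- Corollary on Gotzmann ideals. Suppose `I` and `I'` are Gotzmann
homogeneous ideals of `S = K[x_1,…,x_n]`, generated in degrees `d` and `d'` respectively
with `d ≥ d'`, and `μ(I) = μ(I')`. Then `H_I(T) = T^{d−d'} H_{I'}(T)`; equivalently
`H(I, d+δ) = H(I', d'+δ)` for all `δ ≥ 0`; and `hdepth_1(I) = hdepth_1(I')`. -/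
theorem gotzmann_hilbert_shift {K : Type} [Field K] {n d d' : ℕ}
    (I I' : Ideal (MvPolynomial (Fin n) K))
    (hG : IsGotzmannIdeal I) (hG' : IsGotzmannIdeal I')
    (hgen : GenInDegHomog I d) (hgen' : GenInDegHomog I' d') (hdd : d' ≤ d)
    (hmu : mu I = mu I') :
    ((PowerSeries.mk fun j => (hilb I j)) =
      (PowerSeries.X : PowerSeries ℕ) ^ (d - d') * PowerSeries.mk fun j => hilb I' j) ∧
    (∀ δ : ℕ, hilb I (d + δ) = hilb I' (d' + δ)) ∧
    hdepth1 I = hdepth1 I' := by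
  rcases Nat.eq_zero_or_pos n with hn | hn
  · -- the degenerate case of no variables
    by_cases hI : I = ⊥
    · have hmu0 : mu I' = 0 := by rw [← hmu, hI, mu_bot]
      have hI' : I' = ⊥ := eq_bot_of_mu_eq_zero hmu0
      subst hI hI'
      have hz : (PowerSeries.mk fun j => (hilb (⊥ : Ideal (MvPolynomial (Fin n) K)) j))
          = 0 := by
        ext j
        rw [PowerSeries.coeff_mk, hilb_bot, map_zero]
      refine ⟨?_, ?_, rfl⟩
      · rw [hz, mul_zero]
      · intro δ
        rw [hilb_bot, hilb_bot]
    · -- I ≠ ⊥, so d = 0 and I = ⊤ = I'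
      have hd0 : d = 0 := by
        by_contra hd
        exact hI (ideal_eq_bot_of hn (Nat.pos_of_ne_zero hd) hgen)
      have hd'0 : d' = 0 := by omega
      have hI'ne : I' ≠ ⊥ := by
        intro hb
        apply hI
        apply eq_bot_of_mu_eq_zero
        rw [hmu, hb, mu_bot]
      have hItop : I = ⊤ := ideal_eq_top_of_ne_bot hn hI
      have hI'top : I' = ⊤ := ideal_eq_top_of_ne_bot hn hI'ne
      have hII' : I = I' := by rw [hItop, hI'top]
      subst hd0
      have hd'' : d' = 0 := hd'0
      subst hd''
      rw [hII']
      exact ⟨by rw [Nat.sub_self, pow_zero, one_mul], fun δ => rfl, rfl⟩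
  · haveI : NeZero n := NeZero.of_pos hn
    have h2 := hilb_shift_main hG hG' hgen hgen' hdd hmu
    have hlow : ∀ j, j < d → hilb I j = 0 := fun j hj => hilb_eq_zero_of_lt hgen hj
    have hlow' : ∀ j, j < d' → hilb I' j = 0 := fun j hj => hilb_eq_zero_of_lt hgen' hj
    exact ⟨series_shift_of hdd hlow hlow' h2, h2,
      hdepth1_congr (d - d') (hilbZ_shift_of hdd hlow hlow' h2)⟩
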